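/- Let G be a finite abelian group and F_q a field with char(F_q) ∤ |G|. If e, e' are primitive idempotents of F_q G and ψ ∈ Aut(G) has linear extension mapping e to e', then ψ(H_e) = H_{e'}, where H_e denotes the unique co-cyclic subgroup associated to e; i.e., H_e and H_{e'} are G-isomorphic. -/

import Mathlib

open scoped Classical

set_option linter.unusedSectionVars false
set_option linter.unusedVariables false
set_option maxHeartbeats 1000000

/-- `hat F H` is the element `Ĥ = (1/|H|) ∑_{h ∈ H} h` of the group algebra `F G`. -/
noncomputable def hat (F : Type) [Field F] {G : Type} [Group G] [Fintype G]
    (H : Subgroup G) : MonoidAlgebra F G :=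
  (Nat.card H : F)⁻¹ • ∑ h ∈ (H : Set G).toFinset, MonoidAlgebra.single h (1 : F)

/-- The `p`-primary (Sylow) component of a commutative group `G`:
the subgroup of elements of `p`-power order. -/
def pComp (G : Type) [CommGroup G] (p : ℕ) : Subgroup G where
  carrier := {x | ∃ n : ℕ, x ^ p ^ n = 1}
  one_mem' := ⟨0, one_pow _⟩
  mul_mem' := by
    rintro a b ⟨m, hm⟩ ⟨k, hk⟩
    refine ⟨m + k, ?_⟩
    have ha : a ^ p ^ (m + k) = 1 := by rw [pow_add, pow_mul, hm, one_pow]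
    have hb : b ^ p ^ (m + k) = 1 := by rw [add_comm, pow_add, pow_mul, hk, one_pow]
    rw [mul_pow, ha, hb, one_mul]
  inv_mem' := by rintro a ⟨m, hm⟩; exact ⟨m, by rw [inv_pow, hm, inv_one]⟩

/-- `H` is a co-cyclic subgroup of `G`: the quotient `G/H` is a nontrivial cyclic group. -/
def Cocyclic {G : Type} [CommGroup G] (H : Subgroup G) : Prop :=
  IsCyclic (G ⧸ H) ∧ Nontrivial (G ⧸ H)

/-- `K` is a co-cyclic subgroup of the subgroup `A`. -/
def CocyclicIn {G : Type} [CommGroup G] (K A : Subgroup G) : Prop :=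
  K ≤ A ∧ IsCyclic (↥A ⧸ K.subgroupOf A) ∧ Nontrivial (↥A ⧸ K.subgroupOf A)

/-- `sharp` assigns to each co-cyclic subgroup `K` of a Sylow subgroup `G_p` the unique
subgroup `K♯` with `K ≤ K♯ ≤ G_p` and `[K♯ : K] = p`. -/
def IsSharp {G : Type} [CommGroup G] [Fintype G] (sharp : Subgroup G → Subgroup G) : Prop :=
  ∀ p ∈ (Fintype.card G).primeFactors, ∀ K : Subgroup G, CocyclicIn K (pComp G p) →
    (K ≤ sharp K ∧ sharp K ≤ pComp G p ∧ K.relIndex (sharp K) = p) ∧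
    ∀ L : Subgroup G, K ≤ L → L ≤ pComp G p → K.relIndex L = p → L = sharp K

/-- The idempotent `e_H` associated to a co-cyclic subgroup `H` of a finite abelian
group `G`: the product over the primes `p` dividing `|G|` of `Ĝ_p` (if `H_p = G_p`) or
`Ĥ_p − Ĥ_p♯` (otherwise), where `H_p = H ∩ G_p` is the `p`-Sylow component of `H`. -/
noncomputable def eH (F : Type) [Field F] {G : Type} [CommGroup G] [Fintype G]
    (sharp : Subgroup G → Subgroup G) (H : Subgroup G) : MonoidAlgebra F G :=
  ∏ p ∈ (Fintype.card G).primeFactors,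
    if pComp G p ⊓ H = pComp G p then hat F (pComp G p)
    else hat F (pComp G p ⊓ H) - hat F (sharp (pComp G p ⊓ H))

/-- `e` is a primitive idempotent: a nonzero idempotent which is not the sum of two
nonzero orthogonal idempotents. -/
def IsPrimIdem {R : Type} [Ring R] (e : R) : Prop :=
  e ≠ 0 ∧ e * e = e ∧
    ∀ a b : R, a * a = a → b * b = b → a * b = 0 → b * a = 0 → e = a + b →
      a = 0 ∨ b = 0


section Aux
variable (F : Type) [Field F] {G : Type} [CommGroup G] [Fintype G]

noncomputable def hatS (H : Subgroup G) : MonoidAlgebra F G :=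
  ∑ h ∈ (H : Set G).toFinset, MonoidAlgebra.single h (1 : F)

lemma hat_eq (H : Subgroup G) : hat F H = (Nat.card H : F)⁻¹ • hatS F H := rfl

noncomputable def aug : MonoidAlgebra F G →ₐ[F] F := MonoidAlgebra.lift F F G 1

lemma aug_single (g : G) (r : F) : aug F (MonoidAlgebra.single g r) = r := by
  simp [aug]

lemma hatS_apply (H : Subgroup G) (x : G) :
    (hatS F H).coeff x = if x ∈ H then (1 : F) else 0 := by
  classical
  rw [hatS, MonoidAlgebra.coeff_sum, Finset.sum_apply']
  simp only [MonoidAlgebra.coeff_single]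
  by_cases hx : x ∈ H
  · rw [Finset.sum_eq_single x]
    · simp [hx]
    · intro b _ hb; simp [Finsupp.single_apply, hb]
    · intro h; exact absurd (by simpa using hx) h
  · rw [Finset.sum_eq_zero]; · simp [hx]
    intro b hb
    have hbH : b ∈ H := by simpa using hb
    have : b ≠ x := fun h => hx (h ▸ hbH)
    simp [Finsupp.single_apply, this]

lemma aug_hatS (H : Subgroup G) : aug F (hatS F H) = (Nat.card H : F) := by
  rw [hatS, map_sum]
  simp [aug_single, Nat.card_eq_card_toFinset]

variable {F}

lemma card_cast_ne (hchar : ¬ (ringChar F ∣ Fintype.card G)) (H : Subgroup G) :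
    (Nat.card H : F) ≠ 0 := by
  intro h
  rw [CharP.cast_eq_zero_iff F (ringChar F)] at h
  exact hchar (h.trans (by rw [← Nat.card_eq_fintype_card]; exact Subgroup.card_subgroup_dvd_card H))

lemma aug_hat (hchar : ¬ (ringChar F ∣ Fintype.card G)) (H : Subgroup G) :
    aug F (hat F H) = 1 := by
  rw [hat_eq, map_smul, aug_hatS, smul_eq_mul, inv_mul_cancel₀ (card_cast_ne hchar H)]

lemma single_mul_hatS {H : Subgroup G} {g : G} (hg : g ∈ H) :
    MonoidAlgebra.single g (1 : F) * hatS F H = hatS F H := by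
  classical
  rw [hatS, Finset.mul_sum]
  simp only [MonoidAlgebra.single_mul_single, one_mul]
  refine Finset.sum_nbij' (fun h => g * h) (fun h => g⁻¹ * h) ?_ ?_ ?_ ?_ ?_
  · intro a ha; simp only [Set.mem_toFinset, SetLike.mem_coe] at ha ⊢; exact H.mul_mem hg ha
  · intro a ha; simp only [Set.mem_toFinset, SetLike.mem_coe] at ha ⊢; exact H.mul_mem (H.inv_mem hg) ha
  · intro a _; group
  · intro a _; group
  · intro a _; rfl

lemma single_mul_hat {H : Subgroup G} {g : G} (hg : g ∈ H) :
    MonoidAlgebra.single g (1 : F) * hat F H = hat F H := by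
  rw [hat_eq, mul_smul_comm, single_mul_hatS hg]

lemma hat_apply (H : Subgroup G) (x : G) :
    (hat F H).coeff x = (Nat.card H : F)⁻¹ * (if x ∈ H then 1 else 0) := by
  rw [hat_eq]; rw [MonoidAlgebra.coeff_smul, Finsupp.smul_apply, hatS_apply, smul_eq_mul]

lemma hat_support_subset (H : Subgroup G) : (hat F H).coeff.support ⊆ (H : Set G).toFinset := by
  intro x hx
  rw [Finsupp.mem_support_iff, hat_apply] at hx
  by_contra hxH
  simp only [Set.mem_toFinset, SetLike.mem_coe] at hxH
  simp [hxH] at hx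

lemma hat_mul_hat (hchar : ¬ (ringChar F ∣ Fintype.card G)) (A B : Subgroup G) :
    hat F A * hat F B = hat F (A ⊔ B) := by
  classical
  set e : MonoidAlgebra F G := hat F A * hat F B with he
  -- the set of g with single g 1 * e = e is a subgroup containing A and B
  have key : ∀ g ∈ A ⊔ B, MonoidAlgebra.single g (1 : F) * e = e := by
    let T : Subgroup G :=
      { carrier := {g | MonoidAlgebra.single g (1 : F) * e = e}
        one_mem' := by
          show MonoidAlgebra.single (1 : G) (1 : F) * e = e
          rw [← MonoidAlgebra.one_def, one_mul]
        mul_mem' := by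
          intro a b ha hb
          simp only [Set.mem_setOf_eq] at ha hb ⊢
          have : MonoidAlgebra.single (a * b) (1 : F)
              = MonoidAlgebra.single a 1 * MonoidAlgebra.single b 1 := by
            rw [MonoidAlgebra.single_mul_single, one_mul]
          rw [this, mul_assoc, hb, ha]
        inv_mem' := by
          intro a ha
          simp only [Set.mem_setOf_eq] at ha ⊢
          calc MonoidAlgebra.single a⁻¹ (1 : F) * e
              = MonoidAlgebra.single a⁻¹ (1 : F) * (MonoidAlgebra.single a 1 * e) := by rw [ha]
            _ = (MonoidAlgebra.single a⁻¹ (1 : F) * MonoidAlgebra.single a 1) * e := by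
                rw [mul_assoc]
            _ = e := by
                rw [MonoidAlgebra.single_mul_single, one_mul, inv_mul_cancel,
                  ← MonoidAlgebra.one_def, one_mul] }
    have hA : A ≤ T := by
      intro g hg
      show MonoidAlgebra.single g (1 : F) * e = e
      rw [he, ← mul_assoc, single_mul_hat hg]
    have hB : B ≤ T := by
      intro g hg
      show MonoidAlgebra.single g (1 : F) * e = e
      rw [he, mul_comm (hat F A) (hat F B), ← mul_assoc, single_mul_hat hg,
        mul_comm (hat F B) (hat F A)]
    exact fun g hg => (sup_le hA hB : A ⊔ B ≤ T) hg
  have hsupp : ∀ x : G, x ∉ A ⊔ B → e.coeff x = 0 := by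
    intro x hx
    by_contra hx0
    have hxe : x ∈ e.coeff.support := Finsupp.mem_support_iff.mpr hx0
    have := MonoidAlgebra.support_coeff_mul_subset (hat F A) (hat F B) hxe
    rw [Finset.mem_mul] at this
    obtain ⟨a, ha, b, hb, rfl⟩ := this
    have haA : a ∈ A := by have := hat_support_subset A ha; simpa using this
    have hbB : b ∈ B := by have := hat_support_subset B hb; simpa using this
    exact hx (mul_mem (le_sup_left (a := A) (b := B) haA) (le_sup_right (a := A) (b := B) hbB))
  have hconst : ∀ x ∈ A ⊔ B, e.coeff x = e.coeff 1 := by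
    intro x hx
    conv_lhs => rw [← key x hx]
    rw [MonoidAlgebra.coeff_single_mul_apply, one_mul, inv_mul_cancel]
  have heq : e = e.coeff 1 • hatS F (A ⊔ B) := by
    ext x
    rw [MonoidAlgebra.coeff_smul, Finsupp.smul_apply, hatS_apply, smul_eq_mul]
    by_cases hx : x ∈ A ⊔ B
    · rw [if_pos hx, mul_one, hconst x hx]
    · rw [if_neg hx, mul_zero, hsupp x hx]
  have haug : aug F e = 1 := by
    rw [he, map_mul, aug_hat hchar, aug_hat hchar, one_mul]
  rw [heq, map_smul, aug_hatS, smul_eq_mul] at haug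
  have hcard := card_cast_ne hchar (A ⊔ B)
  have he1 : e.coeff 1 = (Nat.card ↥(A ⊔ B) : F)⁻¹ := by
    rw [Nat.card_eq_fintype_card] at hcard ⊢
    rw [Nat.card_eq_fintype_card] at haug
    field_simp
    linear_combination haug
  rw [heq, he1, ← hat_eq]

end Aux

section Part2
variable {G : Type} [CommGroup G] [Fintype G]

lemma mem_pComp {p : ℕ} {x : G} : x ∈ pComp G p ↔ ∃ n : ℕ, x ^ p ^ n = 1 := Iff.rfl

lemma pComp_eq_bot_of_not_dvd {p : ℕ} (hp : p.Prime) (h : ¬ p ∣ Fintype.card G) :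
    pComp G p = ⊥ := by
  rw [eq_bot_iff]
  rintro x ⟨n, hn⟩
  have h1 : orderOf x ∣ p ^ n := orderOf_dvd_of_pow_eq_one hn
  have h2 : orderOf x ∣ Fintype.card G := orderOf_dvd_card
  have hcop : Nat.Coprime (p ^ n) (Fintype.card G) :=
    Nat.Coprime.pow_left n ((Nat.Prime.coprime_iff_not_dvd hp).mpr h)
  have hd1 : orderOf x ∣ 1 := hcop ▸ Nat.dvd_gcd h1 h2
  have : x = 1 := orderOf_eq_one_iff.mp (Nat.dvd_one.mp hd1)
  simp [this]

lemma mem_of_pComp_parts (K : Subgroup G) (x : G)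
    (hx : ∀ p : ℕ, p.Prime → ∀ y : G, y ∈ Subgroup.zpowers x → y ∈ pComp G p → y ∈ K) :
    x ∈ K := by
  have main : ∀ n : ℕ, ∀ x : G, orderOf x = n →
      (∀ p : ℕ, p.Prime → ∀ y : G, y ∈ Subgroup.zpowers x → y ∈ pComp G p → y ∈ K) → x ∈ K := by
    intro n
    induction n using Nat.strong_induction_on with
    | _ n ih =>
      intro x hn hx
      have n0 : n ≠ 0 := by rw [← hn]; exact (orderOf_pos x).ne'
      by_cases h1 : n = 1
      · have : x = 1 := orderOf_eq_one_iff.mp (by rw [hn, h1])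
        rw [this]; exact K.one_mem
      set p := n.minFac with hp
      have pp : p.Prime := Nat.minFac_prime h1
      have hpn : p ∣ n := Nat.minFac_dvd n
      set k := n.factorization p with hkdef
      have hk0 : k ≠ 0 := by
        have := Nat.Prime.factorization_pos_of_dvd pp n0 hpn
        omega
      set m := ordCompl[p] n with hm
      have hco : Nat.Coprime p m := Nat.coprime_ordCompl pp n0
      have hsplit : p ^ k * m = n := Nat.ordProj_mul_ordCompl_eq_self n p
      have hm0 : m ≠ 0 := by
        intro h; rw [h, mul_zero] at hsplit; exact n0 hsplit.symm
      have hpk1 : 1 < p ^ k := Nat.one_lt_pow hk0 pp.one_lt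
      have hcop : Nat.Coprime m (p ^ k) := (Nat.Coprime.pow_left k hco).symm
      obtain ⟨c, -, hc⟩ := Nat.exists_mul_mod_eq_one_of_coprime hcop hpk1
      -- u = x^(m*c) is the p-part
      have hu_pow : (x ^ (m * c)) ^ p ^ k = 1 := by
        rw [← pow_mul]
        apply orderOf_dvd_iff_pow_eq_one.mp
        rw [hn, ← hsplit]
        exact ⟨c, by ring⟩
      have hu : x ^ (m * c) ∈ K :=
        hx p pp _ (Subgroup.npow_mem_zpowers x (m * c)) ⟨k, hu_pow⟩
      -- w = (x^(p^k * q))⁻¹ where m*c = p^k*q + 1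
      set q := m * c / p ^ k with hq
      have hdm : p ^ k * q + 1 = m * c := by
        have h2 := Nat.div_add_mod (m * c) (p ^ k)
        rw [hc] at h2
        exact h2
      set w := (x ^ (p ^ k * q))⁻¹ with hw
      have hxuw : x = w * x ^ (m * c) := by
        rw [hw, ← hdm, pow_add, pow_one, inv_mul_cancel_left]
      have hwzp : w ∈ Subgroup.zpowers x :=
        (Subgroup.zpowers x).inv_mem (Subgroup.npow_mem_zpowers x _)
      have hordw : orderOf w ∣ m := by
        rw [hw, orderOf_inv, pow_mul]
        have h1 : orderOf ((x ^ p ^ k) ^ q) ∣ orderOf (x ^ p ^ k) := orderOf_pow_dvd q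
        have h2 : orderOf (x ^ p ^ k) = m := by
          rw [orderOf_pow, hn, Nat.gcd_eq_right ⟨m, hsplit.symm⟩, ← hsplit,
            Nat.mul_div_cancel_left _ (by omega : 0 < p ^ k)]
        rwa [h2] at h1
      have hmlt : m < n := by
        rw [← hsplit]
        have : 0 < m := Nat.pos_of_ne_zero hm0
        calc m = 1 * m := (one_mul m).symm
        _ < p ^ k * m := (Nat.mul_lt_mul_right this).mpr hpk1
      have hwK : w ∈ K := by
        refine ih (orderOf w) ?_ w rfl ?_
        · exact lt_of_le_of_lt (Nat.le_of_dvd (Nat.pos_of_ne_zero hm0) hordw) hmlt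
        · intro p' pp' y hy hyp
          exact hx p' pp' y (le_trans (Subgroup.zpowers_le.mpr hwzp) le_rfl hy) hyp
      rw [hxuw]; exact K.mul_mem hwK hu
  exact main (orderOf x) x rfl hx

lemma subgroup_eq_of_pComp {H H' : Subgroup G}
    (h : ∀ p : ℕ, p.Prime → pComp G p ⊓ H = pComp G p ⊓ H') : H = H' := by
  have key : ∀ H H' : Subgroup G, (∀ p : ℕ, p.Prime → pComp G p ⊓ H = pComp G p ⊓ H') → H ≤ H' := by
    intro A B hAB x hxA
    apply mem_of_pComp_parts
    intro p pp y hy hyp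
    have hyA : y ∈ A := Subgroup.zpowers_le.mpr hxA hy
    have : y ∈ pComp G p ⊓ A := ⟨hyp, hyA⟩
    rw [hAB p pp] at this
    exact this.2
  exact le_antisymm (key H H' h) (key H' H fun p pp => (h p pp).symm)

lemma exists_bad_prime {H H' : Subgroup G} (hne : H ≠ H') :
    ∃ p ∈ (Fintype.card G).primeFactors, pComp G p ⊓ H ≠ pComp G p ⊓ H' := by
  by_contra hcon
  push_neg at hcon
  apply hne
  apply subgroup_eq_of_pComp
  intro p pp
  by_cases hp : p ∣ Fintype.card G
  · exact hcon p (Nat.mem_primeFactors.mpr ⟨pp, hp, Fintype.card_ne_zero⟩)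
  · rw [pComp_eq_bot_of_not_dvd pp hp, bot_inf_eq, bot_inf_eq]

end Part2

section Part3
variable {G : Type} [CommGroup G] [Fintype G]

lemma cocyclicIn_of_cocyclic {H : Subgroup G} (hH : Cocyclic H) (p : ℕ)
    (hne : pComp G p ⊓ H ≠ pComp G p) :
    CocyclicIn (pComp G p ⊓ H) (pComp G p) := by
  set P := pComp G p with hP
  have hsub : (P ⊓ H).subgroupOf P = H.subgroupOf P := by
    ext ⟨x, hx⟩
    simp [Subgroup.mem_subgroupOf, hx]
  have e0 : (↥P ⧸ (P ⊓ H).subgroupOf P) ≃* (↥P ⧸ H.subgroupOf P) :=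
    QuotientGroup.quotientMulEquivOfEq hsub
  refine ⟨inf_le_left, ?_, ?_⟩
  · set φ : ↥P →* G ⧸ H := (QuotientGroup.mk' H).comp P.subtype with hφ
    have hker : φ.ker = H.subgroupOf P := by
      ext x
      simp [hφ, MonoidHom.mem_ker, Subgroup.mem_subgroupOf, QuotientGroup.eq_one_iff]
    have e : (↥P ⧸ H.subgroupOf P) ≃* φ.range :=
      (QuotientGroup.quotientMulEquivOfEq hker.symm).trans (QuotientGroup.quotientKerEquivRange φ)
    haveI := hH.1
    haveI : IsCyclic φ.range := Subgroup.isCyclic _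
    exact isCyclic_of_surjective (e.symm.trans e0.symm) (e.symm.trans e0.symm).surjective
  · have : ¬ P ≤ H := fun h => hne (inf_eq_left.mpr h)
    obtain ⟨x, hxP, hxH⟩ := SetLike.not_le_iff_exists.mp this
    refine ⟨e0.symm (QuotientGroup.mk ⟨x, hxP⟩), e0.symm 1, fun hcon => ?_⟩
    have h2 : (QuotientGroup.mk (⟨x, hxP⟩ : ↥P) : ↥P ⧸ H.subgroupOf P) = 1 := by
      simpa using e0.symm.injective hcon
    rw [QuotientGroup.eq_one_iff] at h2
    rw [Subgroup.mem_subgroupOf] at h2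
    exact hxH h2

lemma sharp_le {sharp : Subgroup G → Subgroup G} (hsharp : IsSharp sharp) {p : ℕ}
    (hp : p ∈ (Fintype.card G).primeFactors) {K L : Subgroup G}
    (hK : CocyclicIn K (pComp G p)) (hKL : K ≤ L) (hLP : L ≤ pComp G p) (hne : K ≠ L) :
    sharp K ≤ L := by
  set P := pComp G p with hPdef
  have pp : p.Prime := (Nat.mem_primeFactors.mp hp).1
  have hPgrp : IsPGroup p ↥P := by
    intro g
    obtain ⟨n, hn⟩ := g.2
    exact ⟨n, by ext; simpa using hn⟩
  obtain ⟨x, hxL, hxK⟩ := SetLike.exists_of_lt (lt_of_le_of_ne hKL hne)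
  have hxP : x ∈ P := hLP hxL
  set xb : ↥P ⧸ K.subgroupOf P := QuotientGroup.mk ⟨x, hxP⟩ with hxb
  have hxb1 : xb ≠ 1 := by
    rw [hxb, Ne, QuotientGroup.eq_one_iff]
    simpa [Subgroup.mem_subgroupOf] using hxK
  have hex : ∃ n : ℕ, xb ^ p ^ n = 1 := (hPgrp.to_quotient (K.subgroupOf P)) xb
  set k := Nat.find hex with hkdef
  have hk : xb ^ p ^ k = 1 := Nat.find_spec hex
  have hk0 : k ≠ 0 := by
    intro h
    apply hxb1
    have := hk
    rw [h, pow_zero, pow_one] at this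
    exact this
  set z := x ^ p ^ (k - 1) with hz
  have hzL : z ∈ L := pow_mem hxL _
  have hzP : z ∈ P := hLP hzL
  have hmkz : (QuotientGroup.mk (⟨z, hzP⟩ : ↥P) : ↥P ⧸ K.subgroupOf P) = xb ^ p ^ (k - 1) := by
    rw [hxb, ← QuotientGroup.mk_pow]
    congr 1
  have hzK : z ∉ K := by
    intro hzK
    have h1 : xb ^ p ^ (k - 1) = 1 := by
      rw [← hmkz, QuotientGroup.eq_one_iff]
      simpa [Subgroup.mem_subgroupOf] using hzK
    exact Nat.find_min hex (Nat.sub_lt (Nat.pos_of_ne_zero hk0) one_pos) h1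
  have hzpK : z ^ p ∈ K := by
    have hexp : p ^ (k - 1) * p = p ^ k := by
      rw [← pow_succ, Nat.sub_add_cancel (Nat.pos_of_ne_zero hk0)]
    have h1 : xb ^ (p ^ (k - 1) * p) = 1 := by
      rw [hexp]; exact hk
    have h2 : (QuotientGroup.mk (⟨z, hzP⟩ : ↥P) : ↥P ⧸ K.subgroupOf P) ^ p = 1 := by
      rw [hmkz, ← pow_mul]
      exact h1
    rw [← QuotientGroup.mk_pow, QuotientGroup.eq_one_iff] at h2
    simpa [Subgroup.mem_subgroupOf] using h2
  set M := K ⊔ Subgroup.zpowers z with hM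
  have hKM : K ≤ M := le_sup_left
  have hML : M ≤ L := sup_le hKL (Subgroup.zpowers_le.mpr hzL)
  have hMP : M ≤ P := hML.trans hLP
  have hzM : z ∈ M := Subgroup.mem_sup_right (Subgroup.mem_zpowers z)
  set z' : ↥M := ⟨z, hzM⟩ with hz'
  set w : ↥M ⧸ K.subgroupOf M := QuotientGroup.mk z' with hwdef
  have hw1 : w ≠ 1 := by
    rw [hwdef, Ne, QuotientGroup.eq_one_iff]
    simpa [Subgroup.mem_subgroupOf] using hzK
  have hwp : w ^ p = 1 := by
    rw [hwdef, ← QuotientGroup.mk_pow, QuotientGroup.eq_one_iff]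
    simpa [Subgroup.mem_subgroupOf] using hzpK
  have horder : orderOf w = p := by
    have hdvd : orderOf w ∣ p := orderOf_dvd_of_pow_eq_one hwp
    rcases (Nat.Prime.eq_one_or_self_of_dvd pp _ hdvd) with h | h
    · exact absurd (orderOf_eq_one_iff.mp h) hw1
    · exact h
  have hsurj : ∀ q : ↥M ⧸ K.subgroupOf M, q ∈ Subgroup.zpowers w := by
    intro qq
    obtain ⟨m, rfl⟩ := QuotientGroup.mk_surjective qq
    have hm : (m : G) ∈ K ⊔ Subgroup.zpowers z := m.2
    rw [Subgroup.mem_sup] at hm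
    obtain ⟨y, hy, zz, hzz, hmul⟩ := hm
    obtain ⟨j, rfl⟩ := hzz
    refine ⟨j, ?_⟩
    show w ^ j = QuotientGroup.mk m
    rw [hwdef, ← QuotientGroup.mk_zpow, QuotientGroup.eq]
    rw [Subgroup.mem_subgroupOf]
    have hcoe : (((z' ^ j)⁻¹ * m : ↥M) : G) = y := by
      push_cast
      show (z ^ j)⁻¹ * (m : G) = y
      rw [← hmul]
      show (z ^ j)⁻¹ * (y * z ^ j) = y
      rw [mul_comm y, ← mul_assoc, inv_mul_cancel, one_mul]
    rw [hcoe]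
    exact hy
  have hcardq : Nat.card (↥M ⧸ K.subgroupOf M) = p := by
    rw [← orderOf_eq_card_of_forall_mem_zpowers hsurj, horder]
  have hrel : K.relIndex M = p := hcardq
  have := (hsharp p hp K hK).2 M hKM hMP hrel
  rw [← this]
  exact hML

end Part3

section Part4
variable {F : Type} [Field F] {G : Type} [CommGroup G] [Fintype G]

lemma pComp_map (ψ : G ≃* G) (p : ℕ) : (pComp G p).map ψ.toMonoidHom = pComp G p := by
  ext x
  constructor
  · rintro ⟨y, ⟨n, hy⟩, rfl⟩
    exact ⟨n, by rw [← map_pow, hy, map_one]⟩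
  · rintro ⟨n, hx⟩
    refine ⟨ψ.symm x, ⟨n, ψ.injective ?_⟩, ψ.apply_symm_apply x⟩
    rw [map_pow, ψ.apply_symm_apply, hx, map_one]

lemma card_map (ψ : G ≃* G) (H : Subgroup G) :
    Nat.card (H.map ψ.toMonoidHom) = Nat.card H :=
  (Nat.card_congr (H.equivMapOfInjective ψ.toMonoidHom ψ.injective).toEquiv).symm

lemma hat_map (ψ : G ≃* G) (H : Subgroup G) :
    MonoidAlgebra.domCongr F F ψ (hat F H) = hat F (H.map ψ.toMonoidHom) := by
  rw [hat, hat, map_smul, card_map]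
  congr 1
  rw [map_sum]
  simp only [MonoidAlgebra.domCongr_single]
  refine Finset.sum_nbij' (fun h => ψ h) (fun h => ψ.symm h) ?_ ?_ ?_ ?_ ?_
  · intro a ha
    simp only [Set.mem_toFinset, SetLike.mem_coe] at ha ⊢
    exact ⟨a, ha, rfl⟩
  · intro a ha
    simp only [Set.mem_toFinset, SetLike.mem_coe] at ha ⊢
    obtain ⟨y, hy, rfl⟩ := ha
    simpa using hy
  · intro a _; simp
  · intro a _; simp
  · intro a _; rfl

lemma pComp_inf_map (ψ : G ≃* G) (H : Subgroup G) (p : ℕ) :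
    (pComp G p ⊓ H).map ψ.toMonoidHom = pComp G p ⊓ H.map ψ.toMonoidHom := by
  rw [Subgroup.map_inf _ _ ψ.toMonoidHom ψ.injective, pComp_map]

lemma relindex_map (ψ : G ≃* G) (K L : Subgroup G) :
    (K.map ψ.toMonoidHom).relIndex (L.map ψ.toMonoidHom) = K.relIndex L := by
  have h1 : K.map ψ.toMonoidHom = K.comap ψ.symm.toMonoidHom := by
    ext x
    simp only [Subgroup.mem_map, Subgroup.mem_comap]
    constructor
    · rintro ⟨y, hy, rfl⟩; simpa using hy
    · intro h; exact ⟨ψ.symm x, h, by simp⟩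
  have h2 : (L.map ψ.toMonoidHom).map ψ.symm.toMonoidHom = L := by
    ext x
    simp only [Subgroup.mem_map]
    constructor
    · rintro ⟨y, ⟨z, hz, rfl⟩, rfl⟩; simpa using hz
    · intro h; exact ⟨ψ x, ⟨x, h, rfl⟩, by simp⟩
  rw [h1, Subgroup.relIndex_comap, h2]

lemma cocyclic_map (ψ : G ≃* G) {H : Subgroup G} (hH : Cocyclic H) :
    Cocyclic (H.map ψ.toMonoidHom) := by
  have e : (G ⧸ H) ≃* (G ⧸ H.map ψ.toMonoidHom) := QuotientGroup.congr H _ ψ rfl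
  constructor
  · haveI := hH.1
    exact isCyclic_of_surjective e e.surjective
  · obtain ⟨a, b, hab⟩ := hH.2
    exact ⟨e a, e b, fun h => hab (e.injective h)⟩

lemma sharp_map {sharp : Subgroup G → Subgroup G} (hsharp : IsSharp sharp) (ψ : G ≃* G)
    {p : ℕ} (hp : p ∈ (Fintype.card G).primeFactors) {H : Subgroup G} (hH : Cocyclic H)
    (hne : pComp G p ⊓ H ≠ pComp G p) :
    (sharp (pComp G p ⊓ H)).map ψ.toMonoidHom = sharp (pComp G p ⊓ H.map ψ.toMonoidHom) := by
  set P := pComp G p with hPdef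
  set K := P ⊓ H with hKdef
  have hK : CocyclicIn K P := cocyclicIn_of_cocyclic hH p hne
  have hmapK : K.map ψ.toMonoidHom = P ⊓ H.map ψ.toMonoidHom := pComp_inf_map ψ H p
  have hne' : P ⊓ H.map ψ.toMonoidHom ≠ P := by
    rw [← hmapK]
    intro hcon
    apply hne
    apply Subgroup.map_injective (f := ψ.toMonoidHom) ψ.injective
    rw [hcon, pComp_map]
  have hK' : CocyclicIn (P ⊓ H.map ψ.toMonoidHom) P :=
    cocyclicIn_of_cocyclic (cocyclic_map ψ hH) p hne'
  obtain ⟨⟨h1, h2, h3⟩, -⟩ := hsharp p hp K hK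
  obtain ⟨-, huniq⟩ := hsharp p hp (P ⊓ H.map ψ.toMonoidHom) hK'
  refine huniq ((sharp K).map ψ.toMonoidHom) ?_ ?_ ?_
  · rw [← hmapK]
    exact Subgroup.map_mono h1
  · have := Subgroup.map_mono (f := ψ.toMonoidHom) h2
    rwa [pComp_map] at this
  · rw [← hmapK, relindex_map]
    exact h3

lemma eH_map {sharp : Subgroup G → Subgroup G} (hsharp : IsSharp sharp) (ψ : G ≃* G)
    {H : Subgroup G} (hH : Cocyclic H) :
    MonoidAlgebra.domCongr F F ψ (eH F sharp H) = eH F sharp (H.map ψ.toMonoidHom) := by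
  rw [eH, eH, map_prod]
  refine Finset.prod_congr rfl ?_
  intro p hp
  have hmapK : (pComp G p ⊓ H).map ψ.toMonoidHom = pComp G p ⊓ H.map ψ.toMonoidHom :=
    pComp_inf_map ψ H p
  by_cases hc : pComp G p ⊓ H = pComp G p
  · have hc' : pComp G p ⊓ H.map ψ.toMonoidHom = pComp G p := by
      rw [← hmapK, hc, pComp_map]
    rw [if_pos hc, if_pos hc', hat_map, pComp_map]
  · have hc' : pComp G p ⊓ H.map ψ.toMonoidHom ≠ pComp G p := by
      rw [← hmapK]
      intro hcon
      apply hc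
      apply Subgroup.map_injective (f := ψ.toMonoidHom) ψ.injective
      rw [hcon, pComp_map]
    rw [if_neg hc, if_neg hc', map_sub, hat_map, hat_map, hmapK, sharp_map hsharp ψ hp hH hc]

lemma eH_orth (hchar : ¬ (ringChar F ∣ Fintype.card G)) {sharp : Subgroup G → Subgroup G}
    (hsharp : IsSharp sharp) {H H' : Subgroup G} (hH : Cocyclic H) (hH' : Cocyclic H')
    (hne : H ≠ H') : eH F sharp H * eH F sharp H' = 0 := by
  obtain ⟨p, hp, hpn⟩ := exists_bad_prime hne
  rw [eH, eH, ← Finset.prod_mul_distrib]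
  apply Finset.prod_eq_zero hp
  by_cases h1 : pComp G p ⊓ H = pComp G p <;> by_cases h2 : pComp G p ⊓ H' = pComp G p
  · exact absurd (h1.trans h2.symm) hpn
  · rw [if_pos h1, if_neg h2]
    obtain ⟨⟨hb1, hb2, -⟩, -⟩ := hsharp p hp (pComp G p ⊓ H') (cocyclicIn_of_cocyclic hH' p h2)
    rw [mul_sub, hat_mul_hat hchar, hat_mul_hat hchar, sup_eq_left.mpr inf_le_left,
      sup_eq_left.mpr hb2, sub_self]
  · rw [if_neg h1, if_pos h2]
    obtain ⟨⟨hb1, hb2, -⟩, -⟩ := hsharp p hp (pComp G p ⊓ H) (cocyclicIn_of_cocyclic hH p h1)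
    rw [sub_mul, hat_mul_hat hchar, hat_mul_hat hchar, sup_eq_right.mpr inf_le_left,
      sup_eq_right.mpr hb2, sub_self]
  · rw [if_neg h1, if_neg h2]
    set P := pComp G p with hPdef
    set K := P ⊓ H with hKdef
    set K' := P ⊓ H' with hK'def
    have hKc : CocyclicIn K P := cocyclicIn_of_cocyclic hH p h1
    have hK'c : CocyclicIn K' P := cocyclicIn_of_cocyclic hH' p h2
    have hKK' : K ≠ K' := hpn
    obtain ⟨⟨hsK1, hsK2, -⟩, -⟩ := hsharp p hp K hKc
    obtain ⟨⟨hsK'1, hsK'2, -⟩, -⟩ := hsharp p hp K' hK'c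
    by_cases hle : K' ≤ K
    · have h3 : sharp K' ≤ K := sharp_le hsharp hp hK'c hle inf_le_left (Ne.symm hKK')
      rw [mul_sub, sub_mul, sub_mul,
        hat_mul_hat hchar, hat_mul_hat hchar, hat_mul_hat hchar, hat_mul_hat hchar,
        sup_eq_left.mpr hle, sup_eq_left.mpr (hle.trans hsK1),
        sup_eq_left.mpr h3, sup_eq_left.mpr (h3.trans hsK1)]
      ring
    · by_cases hle' : K ≤ K'
      · have h3 : sharp K ≤ K' := sharp_le hsharp hp hKc hle' inf_le_left hKK'
        rw [mul_sub, sub_mul, sub_mul,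
          hat_mul_hat hchar, hat_mul_hat hchar, hat_mul_hat hchar, hat_mul_hat hchar,
          sup_eq_right.mpr hle', sup_eq_right.mpr h3,
          sup_eq_right.mpr (hle'.trans hsK'1), sup_eq_right.mpr (h3.trans hsK'1)]
        ring
      · have hne1 : K ≠ K ⊔ K' := fun h => hle' (by
          have : K' ≤ K := left_eq_sup.mp h
          exact absurd this hle)
        have h3 : sharp K ≤ K ⊔ K' :=
          sharp_le hsharp hp hKc le_sup_left (sup_le inf_le_left inf_le_left) hne1
        have hne2 : K ≠ K ⊔ sharp K' := by
          intro h
          have : sharp K' ≤ K := left_eq_sup.mp h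
          exact hle (hsK'1.trans this)
        have h4 : sharp K ≤ K ⊔ sharp K' :=
          sharp_le hsharp hp hKc le_sup_left (sup_le inf_le_left hsK'2) hne2
        have e1 : sharp K ⊔ K' = K ⊔ K' :=
          le_antisymm (sup_le h3 le_sup_right) (sup_le_sup_right hsK1 K')
        have e2 : sharp K ⊔ sharp K' = K ⊔ sharp K' :=
          le_antisymm (sup_le h4 le_sup_right) (sup_le_sup_right hsK1 (sharp K'))
        rw [mul_sub, sub_mul, sub_mul,
          hat_mul_hat hchar, hat_mul_hat hchar, hat_mul_hat hchar, hat_mul_hat hchar,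
          e1, e2]
        ring

end Part4


theorem stmt12 (F : Type) [Field F] (G : Type) [CommGroup G] [Fintype G]
    (hchar : ¬ (ringChar F ∣ Fintype.card G))
    (sharp : Subgroup G → Subgroup G) (hsharp : IsSharp sharp)
    (e e' : MonoidAlgebra F G) (he : IsPrimIdem e) (he' : IsPrimIdem e')
    (hne : e ≠ hat F (⊤ : Subgroup G)) (hne' : e' ≠ hat F (⊤ : Subgroup G))
    -- `He` and `He'` are the unique co-cyclic subgroups associated to `e` and `e'`
    (He He' : Subgroup G)
    (hHe : Cocyclic He ∧ e * eH F sharp He = e)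
    (hHe' : Cocyclic He' ∧ e' * eH F sharp He' = e')
    (ψ : G ≃* G) (hψ : MonoidAlgebra.domCongr F F ψ e = e') :
    He.map ψ.toMonoidHom = He' := by
  obtain ⟨hcyc, heq⟩ := hHe
  obtain ⟨hcyc', heq'⟩ := hHe'
  have hmapcyc : Cocyclic (He.map ψ.toMonoidHom) := cocyclic_map ψ hcyc
  have h1 : e' * eH F sharp (He.map ψ.toMonoidHom) = e' := by
    rw [← hψ, ← eH_map hsharp ψ hcyc, ← map_mul, heq]
  by_contra hcontra
  have h0 : eH F sharp He' * eH F sharp (He.map ψ.toMonoidHom) = 0 :=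
    eH_orth hchar hsharp hcyc' hmapcyc (Ne.symm hcontra)
  have : e' = 0 := by
    calc e' = e' * eH F sharp (He.map ψ.toMonoidHom) := h1.symm
    _ = (e' * eH F sharp He') * eH F sharp (He.map ψ.toMonoidHom) := by rw [heq']
    _ = e' * (eH F sharp He' * eH F sharp (He.map ψ.toMonoidHom)) := by rw [mul_assoc]
    _ = 0 := by rw [h0, mul_zero]
  exact he'.1 this
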